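/- Absence of embedded eigenvalues: let λ ∈ ℝ satisfy |cos λ| < ρ_∞. If u : ℤ → ℂ² is square-summable, i.e. ∑_{x∈ℤ} ‖u(x)‖² < ∞, and satisfies the eigenvalue equation (Uu)(x) = e^{iλ} u(x) for all x ∈ ℤ, then u(x) = 0 for all x ∈ ℤ. -/

import Mathlib

set_option maxHeartbeats 2000000
open Complex Filter

lemma keyAlg (a b a' b' α E s c g ρ : ℂ)
    (hE : E = c + s*I) (hEne : E ≠ 0)
    (hsc : s^2 + c^2 = 1)
    (hg : g^2 = s^2 - (starRingEnd ℂ) α * α)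
    (h1 : ρ*E*a' = a + E*((starRingEnd ℂ) α)*b)
    (h2 : ρ*b' = E*b + α*a) :
    ρ*(I*(s-g)*a' - (starRingEnd ℂ) α * b')
      = (c + g*I)*(I*(s-g)*a - (starRingEnd ℂ) α * b) := by
  subst hE
  apply mul_left_cancel₀ hEne
  linear_combination (I*(s-g))*h1 - ((starRingEnd ℂ) α)*(c+s*I)*h2
    - a*I*(s-I*c)*hg - a*I*(s-g)*hsc
    + (-c*((starRingEnd ℂ) α)*a*α + s*I*g^2*a - s^2*I*g*a)*Complex.I_sq

theorem aux (α : ℤ → ℂ)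
    (hsum : Summable fun x : ℤ => ‖α (x + 1) - α x‖)
    (h02 : ∀ x : ℤ, ‖α x‖ < 1)
    (c s : ℝ) (hsc : s^2 + c^2 = 1)
    (E : ℂ) (hE : E = (c:ℂ) + (s:ℂ)*I) (hEne : E ≠ 0)
    (ρ : ℤ → ℝ) (hρ : ∀ x, ρ x = Real.sqrt (1 - ‖α x‖^2))
    (a b : ℤ → ℂ)
    (hr1 : ∀ x, (ρ x : ℂ)*E*(a (x+1)) = a x + E*((starRingEnd ℂ) (α x))*(b x))
    (hr2 : ∀ x, (ρ x : ℂ)*(b (x+1)) = E*(b x) + (α x)*(a x))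
    (ha0 : Tendsto (fun x => ‖a x‖) atTop (nhds 0))
    (hb0 : Tendsto (fun x => ‖b x‖) atTop (nhds 0))
    (αp : ℂ) (htop : Tendsto α atTop (nhds αp)) (h0p : 0 < ‖αp‖)
    (hγ : 0 < 1 - ‖αp‖^2 - c^2) :
    ∀ x, a x = 0 ∧ b x = 0 := by
  have hα1 : ∀ x, ‖α x‖^2 < 1 := fun x => by nlinarith [h02 x, norm_nonneg (α x)]
  have hρpos : ∀ x, 0 < ρ x := fun x => by
    rw [hρ]; exact Real.sqrt_pos.mpr (by nlinarith [hα1 x])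
  have hρsq : ∀ x, (ρ x)^2 = 1 - ‖α x‖^2 := fun x => by
    rw [hρ]; exact Real.sq_sqrt (by nlinarith [hα1 x])
  have hs1 : |s| ≤ 1 := abs_le.mpr ⟨by nlinarith [sq_nonneg c], by nlinarith [sq_nonneg c]⟩
  have hp1 : ‖αp‖ ≤ 1 := by nlinarith [sq_nonneg c, norm_nonneg αp]
  -- choose N
  obtain ⟨ε, hεdef⟩ : ∃ ε : ℝ, ε = min ((1 - ‖αp‖^2 - c^2)/4) (‖αp‖/2) := ⟨_, rfl⟩
  have hε : 0 < ε := hεdef ▸ lt_min (by linarith) (by linarith)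
  have hε1 : ε ≤ (1 - ‖αp‖^2 - c^2)/4 := hεdef ▸ min_le_left _ _
  have hε2 : ε ≤ ‖αp‖/2 := hεdef ▸ min_le_right _ _
  obtain ⟨N, hN⟩ := Metric.tendsto_atTop.mp htop ε hε
  have hnear : ∀ x ≥ N, ‖α x - αp‖ < ε := fun x hx => by
    rw [← dist_eq_norm]; exact hN x hx
  have hγ2 : ∀ x ≥ N, (1 - ‖αp‖^2 - c^2)/2 ≤ 1 - ‖α x‖^2 - c^2 := by
    intro x hx
    have h1 := hnear x hx
    have h4 := abs_le.mp (abs_norm_sub_norm_le (α x) αp)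
    have h5 := norm_nonneg (α x)
    have h6 := norm_nonneg αp
    nlinarith [h02 x]
  have hmα : ∀ x ≥ N, ‖αp‖/2 ≤ ‖α x‖ := by
    intro x hx
    have h1 := hnear x hx
    have h4 := abs_le.mp (abs_norm_sub_norm_le (α x) αp)
    linarith [h4.2]
  -- g and δ
  obtain ⟨g, hgx⟩ : ∃ g : ℤ → ℝ, ∀ x, g x = Real.sqrt (1 - ‖α x‖^2 - c^2) :=
    ⟨_, fun _ => rfl⟩
  obtain ⟨δ, hδdef⟩ : ∃ δ : ℝ, δ = Real.sqrt ((1 - ‖αp‖^2 - c^2)/2) := ⟨_, rfl⟩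
  have hδ : 0 < δ := hδdef ▸ Real.sqrt_pos.mpr (by linarith)
  have hgnn : ∀ x, 0 ≤ g x := fun x => (hgx x) ▸ Real.sqrt_nonneg _
  have hg1 : ∀ x, g x ≤ 1 := fun x => (hgx x) ▸
    (Real.sqrt_le_one.mpr (by nlinarith [norm_nonneg (α x), sq_nonneg c]))
  have hgsq : ∀ x ≥ N, (g x)^2 = 1 - ‖α x‖^2 - c^2 := fun x hx => (hgx x) ▸
    Real.sq_sqrt (le_trans (by linarith) (hγ2 x hx))
  have hδg : ∀ x ≥ N, δ ≤ g x := fun x hx => by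
    rw [hgx x, hδdef]; exact Real.sqrt_le_sqrt (hγ2 x hx)
  -- L functions
  obtain ⟨L1, hL1⟩ : ∃ L : ℤ → ℂ,
      ∀ x, L x = I*((s:ℂ) - (g x :ℂ))*(a x) - (starRingEnd ℂ) (α x) * (b x) :=
    ⟨_, fun _ => rfl⟩
  obtain ⟨L2, hL2⟩ : ∃ L : ℤ → ℂ,
      ∀ x, L x = I*((s:ℂ) + (g x :ℂ))*(a x) - (starRingEnd ℂ) (α x) * (b x) :=
    ⟨_, fun _ => rfl⟩
  obtain ⟨R, hRx⟩ : ∃ R : ℤ → ℝ, ∀ x, R x = ‖L1 x‖ + ‖L2 x‖ := ⟨_, fun _ => rfl⟩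
  have hRnn : ∀ x, 0 ≤ R x := fun x => by
    rw [hRx]; positivity
  have hconj : ∀ x, (starRingEnd ℂ) (α x) * (α x) = ((‖α x‖^2 : ℝ) : ℂ) := by
    intro x
    rw [mul_comm, Complex.mul_conj, Complex.normSq_eq_norm_sq]
  -- a and b controlled by R
  have haR : ∀ y ≥ N, 2*δ*‖a y‖ ≤ R y := by
    intro y hy
    have hdiff : L2 y - L1 y = I*((2*(g y):ℝ):ℂ)*(a y) := by
      rw [hL1, hL2]; push_cast; ring
    have h1 : ‖L2 y - L1 y‖ ≤ R y := by
      rw [hRx y]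
      exact le_trans (norm_sub_le _ _) (by linarith)
    rw [hdiff, norm_mul, norm_mul, Complex.norm_I, one_mul, Complex.norm_real,
      Real.norm_eq_abs, _root_.abs_of_nonneg (by linarith [hgnn y])] at h1
    nlinarith [hδg y hy, norm_nonneg (a y)]
  have hbR : ∀ y ≥ N, (‖αp‖/2)*‖b y‖ ≤ (1/δ + 1) * R y := by
    intro y hy
    have hdiff : (starRingEnd ℂ) (α y) * (b y) = I*((s:ℂ) - (g y:ℂ))*(a y) - L1 y := by
      rw [hL1]; ring
    have h1 : ‖(starRingEnd ℂ) (α y) * (b y)‖ = ‖α y‖ * ‖b y‖ := by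
      rw [norm_mul, RCLike.norm_conj]
    have h2 : ‖I*((s:ℂ) - (g y:ℂ))*(a y)‖ ≤ 2*‖a y‖ := by
      rw [norm_mul, norm_mul, Complex.norm_I, one_mul]
      have hb2 : ‖(s:ℂ) - (g y:ℂ)‖ ≤ 2 := by
        rw [← Complex.ofReal_sub, Complex.norm_real, Real.norm_eq_abs]
        have := abs_le.mp hs1
        rw [abs_le]
        constructor
        · linarith [hg1 y]
        · linarith [hgnn y]
      nlinarith [norm_nonneg (a y)]
    have h3 : ‖α y‖ * ‖b y‖ ≤ 2*‖a y‖ + ‖L1 y‖ := by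
      rw [← h1, hdiff]
      exact le_trans (norm_sub_le _ _) (by linarith)
    have h4 : 2*δ*‖a y‖ ≤ R y := haR y hy
    have h5 : ‖L1 y‖ ≤ R y := by rw [hRx y]; linarith [norm_nonneg (L2 y)]
    have h7 := hmα y hy
    have h8 : (1/δ)*(2*δ*‖a y‖) = 2*‖a y‖ := by field_simp
    have h9 : (1/δ)*(2*δ*‖a y‖) ≤ (1/δ)*R y := by
      apply mul_le_mul_of_nonneg_left h4 (by positivity)
    have h10 : ‖α y‖ * ‖b y‖ ≤ (1/δ)*R y + R y := by
      rw [h8] at h9; linarith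
    nlinarith [norm_nonneg (b y), hRnn y]
  -- R bounded by a and b
  have hRle : ∀ x, R x ≤ 4*‖a x‖ + 2*‖b x‖ := by
    intro x
    have hb1 : ∀ t : ℝ, |t| ≤ 2 → ‖I*((t:ℝ):ℂ)*(a x) - (starRingEnd ℂ) (α x) * (b x)‖
        ≤ 2*‖a x‖ + ‖b x‖ := by
      intro t ht
      refine le_trans (norm_sub_le _ _) ?_
      rw [norm_mul, norm_mul, Complex.norm_I, one_mul, Complex.norm_real, Real.norm_eq_abs,
        norm_mul, RCLike.norm_conj]
      have := norm_nonneg (a x)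
      have := norm_nonneg (b x)
      have h1 : ‖α x‖ ≤ 1 := (h02 x).le
      nlinarith [norm_nonneg (α x)]
    have e1 : L1 x = I*(((s - g x):ℝ):ℂ)*(a x) - (starRingEnd ℂ) (α x) * (b x) := by
      rw [hL1]; push_cast; ring
    have e2 : L2 x = I*(((s + g x):ℝ):ℂ)*(a x) - (starRingEnd ℂ) (α x) * (b x) := by
      rw [hL2]; push_cast; ring
    have habs := abs_le.mp hs1
    have k1 : ‖L1 x‖ ≤ 2*‖a x‖ + ‖b x‖ := by
      rw [e1]; exact hb1 _ (abs_le.mpr ⟨by linarith [hg1 x], by linarith [hgnn x]⟩)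
    have k2 : ‖L2 x‖ ≤ 2*‖a x‖ + ‖b x‖ := by
      rw [e2]; exact hb1 _ (abs_le.mpr ⟨by linarith [hgnn x], by linarith [hg1 x]⟩)
    rw [hRx]; linarith
  -- the one-step inequality
  obtain ⟨d, hdx⟩ : ∃ d : ℤ → ℝ, ∀ x, d x = ‖α (x+1) - α x‖ := ⟨_, fun _ => rfl⟩
  have hdnn : ∀ x, 0 ≤ d x := fun x => (hdx x) ▸ norm_nonneg _
  obtain ⟨K, hKdef⟩ : ∃ K : ℝ, K = 2*(1/(2*δ^2) + (1/δ + 1)*(2/‖αp‖)) := ⟨_, rfl⟩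
  have hK : 0 ≤ K := by rw [hKdef]; positivity
  have habK : ∀ y ≥ N, ‖a y‖/δ + ‖b y‖ ≤ (1/(2*δ^2) + (1/δ + 1)*(2/‖αp‖)) * R y := by
    intro y hy
    have h1 := haR y hy
    have h2 := hbR y hy
    have e1 : ‖a y‖/δ ≤ 1/(2*δ^2)*R y := by
      calc ‖a y‖/δ = (2*δ*‖a y‖)/(2*δ^2) := by field_simp
        _ ≤ R y/(2*δ^2) := by gcongr
        _ = 1/(2*δ^2)*R y := by ring
    have e2 : ‖b y‖ ≤ (1/δ + 1)*(2/‖αp‖)*R y := by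
      have eb : ‖b y‖ = ((‖αp‖/2)*‖b y‖)*(2/‖αp‖) := by
        have h9 : (‖αp‖/2)*(2/‖αp‖) = 1 := by
          field_simp
        rw [mul_comm (‖αp‖/2) ‖b y‖, mul_assoc, h9, mul_one]
      calc ‖b y‖ = ((‖αp‖/2)*‖b y‖)*(2/‖αp‖) := eb
        _ ≤ ((1/δ + 1)*R y)*(2/‖αp‖) := by gcongr
        _ = (1/δ + 1)*(2/‖αp‖)*R y := by ring
    nlinarith [hRnn y]

  -- the one-step inequality
  have hstep : ∀ x ≥ N, R x ≤ (1 + K*(d x))*(R (x+1)) := by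
    intro x hx
    have hx1 : x + 1 ≥ N := by omega
    have hscC : (s:ℂ)^2 + (c:ℂ)^2 = 1 := by exact_mod_cast hsc
    have hgr : (g x)^2 = s^2 - ‖α x‖^2 := by
      have h1 := hgsq x hx
      nlinarith [hsc]
    have hgC : ((g x :ℝ):ℂ)^2 = (s:ℂ)^2 - (starRingEnd ℂ) (α x) * (α x) := by
      rw [hconj x]; exact_mod_cast hgr
    have hgC2 : (-((g x :ℝ):ℂ))^2 = (s:ℂ)^2 - (starRingEnd ℂ) (α x) * (α x) := by
      rw [neg_sq]; exact hgC
    have key1 : ((ρ x :ℝ):ℂ)*(I*((s:ℂ)-(g x:ℂ))*(a (x+1)) - (starRingEnd ℂ) (α x)*(b (x+1)))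
        = ((c:ℂ) + (g x:ℂ)*I)*(L1 x) := by
      rw [hL1 x]
      exact keyAlg (a x) (b x) (a (x+1)) (b (x+1)) (α x) E (s:ℂ) (c:ℂ) ((g x:ℝ):ℂ)
        ((ρ x:ℝ):ℂ) hE hEne hscC hgC (hr1 x) (hr2 x)
    have key2 : ((ρ x :ℝ):ℂ)*(I*((s:ℂ)+(g x:ℂ))*(a (x+1)) - (starRingEnd ℂ) (α x)*(b (x+1)))
        = ((c:ℂ) - (g x:ℂ)*I)*(L2 x) := by
      have hk := keyAlg (a x) (b x) (a (x+1)) (b (x+1)) (α x) E (s:ℂ) (c:ℂ) (-((g x:ℝ):ℂ))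
        ((ρ x:ℝ):ℂ) hE hEne hscC hgC2 (hr1 x) (hr2 x)
      rw [hL2 x]
      linear_combination hk
    have hcgsq : c^2 + (g x)^2 = (ρ x)^2 := by
      have h1 := hgsq x hx
      have h2 := hρsq x
      linarith
    have hnorm1 : ‖(c:ℂ) + (g x:ℂ)*I‖ = ρ x := by
      rw [Complex.norm_def, Complex.normSq_add_mul_I, hcgsq]
      exact Real.sqrt_sq (hρpos x).le
    have hnorm2 : ‖(c:ℂ) - (g x:ℂ)*I‖ = ρ x := by
      have e : (c:ℂ) - (g x:ℂ)*I = (c:ℂ) + ((-(g x):ℝ):ℂ)*I := by push_cast; ring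
      rw [e, Complex.norm_def, Complex.normSq_add_mul_I, neg_sq, hcgsq]
      exact Real.sqrt_sq (hρpos x).le
    have hρnorm : ‖((ρ x:ℝ):ℂ)‖ = ρ x := by
      rw [Complex.norm_real, Real.norm_eq_abs, abs_of_pos (hρpos x)]
    have n1 : ‖I*((s:ℂ)-(g x:ℂ))*(a (x+1)) - (starRingEnd ℂ) (α x)*(b (x+1))‖ = ‖L1 x‖ := by
      have hk := congrArg norm key1
      rw [norm_mul, norm_mul, hnorm1, hρnorm] at hk
      exact mul_left_cancel₀ (ne_of_gt (hρpos x)) hk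
    have n2 : ‖I*((s:ℂ)+(g x:ℂ))*(a (x+1)) - (starRingEnd ℂ) (α x)*(b (x+1))‖ = ‖L2 x‖ := by
      have hk := congrArg norm key2
      rw [norm_mul, norm_mul, hnorm2, hρnorm] at hk
      exact mul_left_cancel₀ (ne_of_gt (hρpos x)) hk
    -- perturbation
    have hΔg : |g x - g (x+1)| ≤ d x / δ := by
      have e1 := hgsq x hx
      have e2 := hgsq (x+1) hx1
      have hne : |‖α (x+1)‖ - ‖α x‖| ≤ d x := (hdx x) ▸ abs_norm_sub_norm_le (α (x+1)) (α x)
      have h4 := abs_le.mp hne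
      have habs2 : |(g x)^2 - (g (x+1))^2| ≤ 2*(d x) := by
        rw [abs_le]
        constructor
        · nlinarith [norm_nonneg (α x), norm_nonneg (α (x+1)), h02 x, h02 (x+1)]
        · nlinarith [norm_nonneg (α x), norm_nonneg (α (x+1)), h02 x, h02 (x+1)]
      have hgg : 2*δ ≤ g x + g (x+1) := by linarith [hδg x hx, hδg (x+1) hx1]
      have heq : |g x - g (x+1)| * (g x + g (x+1)) = |(g x)^2 - (g (x+1))^2| := by
        rw [← _root_.abs_of_nonneg (show (0:ℝ) ≤ g x + g (x+1) by linarith [hgnn x, hgnn (x+1)]),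
          ← abs_mul]
        congr 1; ring
      have key : |g x - g (x+1)| * (2*δ) ≤ 2*(d x) := by
        calc |g x - g (x+1)| * (2*δ) ≤ |g x - g (x+1)| * (g x + g (x+1)) :=
              mul_le_mul_of_nonneg_left hgg (abs_nonneg _)
          _ = |(g x)^2 - (g (x+1))^2| := heq
          _ ≤ 2*(d x) := habs2
      rw [le_div_iff₀ hδ]
      nlinarith [abs_nonneg (g x - g (x+1))]
    have hdconj : ‖(starRingEnd ℂ) (α x) - (starRingEnd ℂ) (α (x+1))‖ = d x := by
      rw [← map_sub, RCLike.norm_conj, norm_sub_rev, ← hdx x]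
    have pert : ∀ t : ℂ, ‖t - (g x:ℂ)‖ = ‖t - (g x:ℂ)‖ → True := fun _ _ => trivial
    have hd1 : L1 (x+1) - (I*((s:ℂ)-(g x:ℂ))*(a (x+1)) - (starRingEnd ℂ) (α x)*(b (x+1)))
        = I*(((g x - g (x+1)):ℝ):ℂ)*(a (x+1))
          + ((starRingEnd ℂ) (α x) - (starRingEnd ℂ) (α (x+1)))*(b (x+1)) := by
      rw [hL1 (x+1)]; push_cast; ring
    have hd2 : L2 (x+1) - (I*((s:ℂ)+(g x:ℂ))*(a (x+1)) - (starRingEnd ℂ) (α x)*(b (x+1)))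
        = I*(((g (x+1) - g x):ℝ):ℂ)*(a (x+1))
          + ((starRingEnd ℂ) (α x) - (starRingEnd ℂ) (α (x+1)))*(b (x+1)) := by
      rw [hL2 (x+1)]; push_cast; ring
    have hpert1 : ‖L1 (x+1) - (I*((s:ℂ)-(g x:ℂ))*(a (x+1)) - (starRingEnd ℂ) (α x)*(b (x+1)))‖
        ≤ (d x/δ)*‖a (x+1)‖ + (d x)*‖b (x+1)‖ := by
      rw [hd1]
      refine le_trans (norm_add_le _ _) ?_
      rw [norm_mul, norm_mul, norm_mul, Complex.norm_I, one_mul, Complex.norm_real,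
        Real.norm_eq_abs, hdconj]
      have := norm_nonneg (a (x+1))
      have := norm_nonneg (b (x+1))
      nlinarith [hΔg]
    have hpert2 : ‖L2 (x+1) - (I*((s:ℂ)+(g x:ℂ))*(a (x+1)) - (starRingEnd ℂ) (α x)*(b (x+1)))‖
        ≤ (d x/δ)*‖a (x+1)‖ + (d x)*‖b (x+1)‖ := by
      rw [hd2]
      refine le_trans (norm_add_le _ _) ?_
      rw [norm_mul, norm_mul, norm_mul, Complex.norm_I, one_mul, Complex.norm_real,
        Real.norm_eq_abs, hdconj]
      have h9 : |g (x+1) - g x| ≤ d x/δ := by rw [abs_sub_comm]; exact hΔg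
      have := norm_nonneg (a (x+1))
      have := norm_nonneg (b (x+1))
      nlinarith
    have p1 : ‖L1 x‖ ≤ ‖L1 (x+1)‖ + ((d x/δ)*‖a (x+1)‖ + (d x)*‖b (x+1)‖) := by
      have t2 := norm_sub_le (L1 (x+1))
        (L1 (x+1) - (I*((s:ℂ)-(g x:ℂ))*(a (x+1)) - (starRingEnd ℂ) (α x)*(b (x+1))))
      rw [sub_sub_cancel] at t2
      rw [← n1]
      exact le_trans t2 (by linarith [hpert1])
    have p2 : ‖L2 x‖ ≤ ‖L2 (x+1)‖ + ((d x/δ)*‖a (x+1)‖ + (d x)*‖b (x+1)‖) := by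
      have t2 := norm_sub_le (L2 (x+1))
        (L2 (x+1) - (I*((s:ℂ)+(g x:ℂ))*(a (x+1)) - (starRingEnd ℂ) (α x)*(b (x+1))))
      rw [sub_sub_cancel] at t2
      rw [← n2]
      exact le_trans t2 (by linarith [hpert2])
    have hm := mul_le_mul_of_nonneg_left (habK (x+1) hx1) (hdnn x)
    have hfin : (d x/δ)*‖a (x+1)‖ + (d x)*‖b (x+1)‖
        ≤ (1/(2*δ^2) + (1/δ + 1)*(2/‖αp‖))*(d x)*(R (x+1)) := by
      have he : (d x/δ)*‖a (x+1)‖ + (d x)*‖b (x+1)‖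
          = d x*(‖a (x+1)‖/δ + ‖b (x+1)‖) := by ring
      rw [he]
      calc d x*(‖a (x+1)‖/δ + ‖b (x+1)‖)
          ≤ d x*((1/(2*δ^2) + (1/δ + 1)*(2/‖αp‖)) * R (x+1)) := hm
        _ = (1/(2*δ^2) + (1/δ + 1)*(2/‖αp‖))*(d x)*(R (x+1)) := by ring
    have hRx2 : R (x+1) = ‖L1 (x+1)‖ + ‖L2 (x+1)‖ := hRx (x+1)
    rw [hKdef]
    calc R x = ‖L1 x‖ + ‖L2 x‖ := hRx x
      _ ≤ (‖L1 (x+1)‖ + ‖L2 (x+1)‖)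
          + 2*((d x/δ)*‖a (x+1)‖ + (d x)*‖b (x+1)‖) := by linarith [p1, p2]
      _ ≤ (‖L1 (x+1)‖ + ‖L2 (x+1)‖)
          + 2*((1/(2*δ^2) + (1/δ + 1)*(2/‖αp‖))*(d x)*(R (x+1))) := by linarith [hfin]
      _ = R (x+1) + 2*((1/(2*δ^2) + (1/δ + 1)*(2/‖αp‖))*(d x)*(R (x+1))) := by rw [hRx2]
      _ = (1 + 2*(1/(2*δ^2) + (1/δ + 1)*(2/‖αp‖))*(d x))*(R (x+1)) := by ring
  -- iteration
  have hiter : ∀ y, N ≤ y → ∀ n:ℕ,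
      R y ≤ (∏ j ∈ Finset.range n, (1 + K*(d (y+j)))) * R (y + n) := by
    intro y hy n
    induction n with
    | zero => simp
    | succ k ih =>
      have hyk : N ≤ y + k := by omega
      have hstepk := hstep (y+k) hyk
      have hP : (0:ℝ) ≤ ∏ j ∈ Finset.range k, (1 + K*(d (y+j))) :=
        Finset.prod_nonneg fun j _ => add_nonneg zero_le_one (mul_nonneg hK (hdnn (y+j)))
      have e2 : ((k+1:ℕ):ℤ) = (k:ℤ)+1 := by push_cast; ring
      rw [e2]
      have e3 : y + ((k:ℤ)+1) = y + (k:ℤ) + 1 := by ring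
      rw [e3, Finset.prod_range_succ]
      calc R y ≤ (∏ j ∈ Finset.range k, (1+K*(d (y+j)))) * R (y+k) := ih
        _ ≤ (∏ j ∈ Finset.range k, (1+K*(d (y+j)))) * ((1+K*(d (y+k))) * R (y+k+1)) :=
            mul_le_mul_of_nonneg_left hstepk hP
        _ = (∏ j ∈ Finset.range k, (1+K*(d (y+j)))) * (1+K*(d (y+k))) * R (y+k+1) := by ring
  -- product bound
  obtain ⟨D, hDdef⟩ : ∃ D:ℝ, D = ∑' x:ℤ, ‖α (x+1) - α x‖ := ⟨_, rfl⟩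
  have hD0 : 0 ≤ D := hDdef ▸ tsum_nonneg (fun _ => norm_nonneg _)
  have hsumle : ∀ (y:ℤ) (n:ℕ), (∑ j ∈ Finset.range n, d (y+j)) ≤ D := by
    intro y n
    have hinj : Function.Injective (fun j:ℕ => y + (j:ℤ)) := by
      intro i j hij
      have := add_left_cancel hij
      exact_mod_cast this
    have hmap := Finset.sum_map (Finset.range n) ⟨fun j:ℕ => y + (j:ℤ), hinj⟩ d
    have hcalc : (∑ j ∈ Finset.range n, d (y+j))
        = ∑ z ∈ (Finset.range n).map ⟨fun j:ℕ => y + (j:ℤ), hinj⟩, d z := hmap.symm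
    rw [hcalc, hDdef]
    have hdfun : ∀ z ∈ (Finset.range n).map ⟨fun j:ℕ => y + (j:ℤ), hinj⟩,
        d z = ‖α (z+1) - α z‖ := fun z _ => hdx z
    rw [Finset.sum_congr rfl hdfun]
    exact Summable.sum_le_tsum _ (fun i _ => norm_nonneg _) hsum
  have hprod : ∀ (y:ℤ) (n:ℕ),
      (∏ j ∈ Finset.range n, (1 + K*(d (y+j)))) ≤ Real.exp (K * D) := by
    intro y n
    have h1 : (∏ j ∈ Finset.range n, (1 + K*(d (y+j))))
        ≤ ∏ j ∈ Finset.range n, Real.exp (K*(d (y+j))) := by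
      apply Finset.prod_le_prod
      · intro j _
        nlinarith [mul_nonneg hK (hdnn (y+j))]
      · intro j _
        linarith [Real.add_one_le_exp (K*(d (y+j)))]
    have h2 : (∏ j ∈ Finset.range n, Real.exp (K*(d (y+j))))
        = Real.exp (∑ j ∈ Finset.range n, K*(d (y+j))) := (Real.exp_sum _ _).symm
    rw [h2] at h1
    refine le_trans h1 (Real.exp_le_exp.mpr ?_)
    rw [← Finset.mul_sum]
    exact mul_le_mul_of_nonneg_left (hsumle y n) hK
  -- R tends to 0
  have hRtend : Tendsto R atTop (nhds 0) := by
    have h40 : Tendsto (fun x : ℤ => 4*‖a x‖ + 2*‖b x‖) atTop (nhds 0) := by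
      have h4 := ha0.const_mul (4:ℝ)
      have h2 := hb0.const_mul (2:ℝ)
      have h42 := h4.add h2
      norm_num at h42
      exact h42
    exact squeeze_zero hRnn hRle h40
  -- R vanishes on [N, ∞)
  have hR0 : ∀ y ≥ N, R y = 0 := by
    intro y hy
    have hcomp : Tendsto (fun n:ℕ => R (y + n)) atTop (nhds 0) := by
      apply hRtend.comp
      exact tendsto_atTop_add_const_left atTop y tendsto_natCast_atTop_atTop
    have hub : ∀ n:ℕ, R y ≤ Real.exp (K*D)*(R (y + n)) := fun n =>
      le_trans (hiter y hy n) (mul_le_mul_of_nonneg_right (hprod y n) (hRnn _))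
    have hlim : Tendsto (fun n:ℕ => Real.exp (K*D)*(R (y+n))) atTop (nhds 0) := by
      simpa using hcomp.const_mul (Real.exp (K*D))
    have hle0 : R y ≤ 0 := ge_of_tendsto' hlim hub
    linarith [hRnn y]
  have hab0 : ∀ y, N ≤ y → a y = 0 ∧ b y = 0 := by
    intro y hy
    have h1 := haR y hy
    have h2 := hbR y hy
    rw [hR0 y hy] at h1 h2
    constructor
    · have : ‖a y‖ ≤ 0 := by nlinarith
      exact norm_le_zero_iff.mp this
    · have : ‖b y‖ ≤ 0 := by nlinarith [h0p, hδ, norm_nonneg (b y)]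
      exact norm_le_zero_iff.mp this
  -- backward propagation
  have backward : ∀ x:ℤ, a (x+1) = 0 → b (x+1) = 0 → a x = 0 ∧ b x = 0 := by
    intro x ha1 hb1
    have q1 : a x + E*((starRingEnd ℂ) (α x))*(b x) = 0 := by
      have h := hr1 x
      rw [ha1, mul_zero] at h
      linear_combination -h
    have q2 : E*(b x) + (α x)*(a x) = 0 := by
      have h := hr2 x
      rw [hb1, mul_zero] at h
      linear_combination -h
    have hAx : ((ρ x:ℝ):ℂ)^2 = 1 - (starRingEnd ℂ) (α x)*(α x) := by
      rw [hconj x]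
      exact_mod_cast hρsq x
    have hb2 : E*((ρ x:ℂ))^2*(b x) = 0 := by
      linear_combination q2 - (α x)*q1 + E*(b x)*hAx
    have hρne : ((ρ x:ℝ):ℂ) ≠ 0 := by exact_mod_cast (hρpos x).ne'
    have hbx : b x = 0 := by
      rcases mul_eq_zero.mp hb2 with h | h
      · rcases mul_eq_zero.mp h with h' | h'
        · exact absurd h' hEne
        · exact absurd h' (pow_ne_zero 2 hρne)
      · exact h
    have hax : a x = 0 := by
      rw [hbx, mul_zero, add_zero] at q1
      exact q1
    exact ⟨hax, hbx⟩
  -- conclude for all x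
  intro x
  have hdown : ∀ n:ℕ, a (N - n) = 0 ∧ b (N - n) = 0 := by
    intro n
    induction n with
    | zero => simpa using hab0 N le_rfl
    | succ k ih =>
      have e2 : ((k+1:ℕ):ℤ) = (k:ℤ)+1 := by push_cast; ring
      rw [e2]
      have e : N - ((k:ℤ)+1) + 1 = N - (k:ℤ) := by ring
      refine backward _ ?_ ?_
      · rw [e]; exact ih.1
      · rw [e]; exact ih.2
  rcases le_or_gt N x with h | h
  · exact hab0 x h
  · have hx : x = N - ((N - x).toNat : ℤ) := by
      rw [Int.toNat_of_nonneg (by omega)]; ring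
    rw [hx]
    exact hdown _




/-- Absence of embedded eigenvalues for the one-dimensional quantum walk with
general long-range coin: if `|cos λ| < ρ∞` and `u` is a square-summable solution of
`U u = e^{iλ} u`, then `u = 0`. -/
theorem absence_of_embedded_eigenvalues
    (α : ℤ → ℂ)
    (h01 : ∀ x : ℤ, 0 < ‖α x‖) (h02 : ∀ x : ℤ, ‖α x‖ < 1)
    (hsum : Summable fun x : ℤ => ‖α (x + 1) - α x‖)
    (αp αm : ℂ)
    (htop : Tendsto α atTop (nhds αp))
    (hbot : Tendsto α atBot (nhds αm))
    (hpm : ‖αp‖ = ‖αm‖) (h0p : 0 < ‖αp‖) (h1p : ‖αp‖ < 1)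
    (ρ : ℤ → ℝ) (hρ : ∀ x : ℤ, ρ x = Real.sqrt (1 - ‖α x‖ ^ 2))
    (ρinf : ℝ) (hρinf : ρinf = Real.sqrt (1 - ‖αp‖ ^ 2))
    (lam : ℝ) (hlam : |Real.cos lam| < ρinf)
    (u : ℤ → ℂ × ℂ)
    (hu : Summable fun x : ℤ => ‖u x‖ ^ 2)
    (heig : ∀ x : ℤ,
      (ρ (x - 1) : ℂ) * (u (x - 1)).1 + (starRingEnd ℂ) (α (x - 1)) * (u (x - 1)).2
          = Complex.exp (Complex.I * (lam : ℂ)) * (u x).1 ∧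
        -(α (x + 1)) * (u (x + 1)).1 + (ρ (x + 1) : ℂ) * (u (x + 1)).2
          = Complex.exp (Complex.I * (lam : ℂ)) * (u x).2) :
    ∀ x : ℤ, u x = 0 := by
  obtain ⟨a, hax⟩ : ∃ a : ℤ → ℂ, ∀ x, a x = (u x).1 := ⟨_, fun _ => rfl⟩
  obtain ⟨b, hbx⟩ : ∃ b : ℤ → ℂ, ∀ x, b x = (u (x-1)).2 := ⟨_, fun _ => rfl⟩
  obtain ⟨E, hEdef⟩ : ∃ E : ℂ, E = Complex.exp (Complex.I * (lam : ℂ)) := ⟨_, rfl⟩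
  have hEne : E ≠ 0 := hEdef ▸ Complex.exp_ne_zero _
  have hEeq : E = ((Real.cos lam : ℝ) : ℂ) + ((Real.sin lam : ℝ) : ℂ) * Complex.I := by
    rw [hEdef, mul_comm, Complex.exp_mul_I, Complex.ofReal_cos, Complex.ofReal_sin]
  have hb_shift : ∀ x, b (x+1) = (u x).2 := fun x => by
    rw [hbx (x+1), add_sub_cancel_right]
  have hE1 : ∀ x, (ρ x : ℂ)*(a x) + (starRingEnd ℂ) (α x)*(b (x+1)) = E*(a (x+1)) := by
    intro x
    have h := (heig (x+1)).1
    simp only [add_sub_cancel_right] at h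
    rw [← hax x, ← hax (x+1), ← hb_shift x, ← hEdef] at h
    exact h
  have hr2 : ∀ x, (ρ x : ℂ)*(b (x+1)) = E*(b x) + (α x)*(a x) := by
    intro x
    have h := (heig (x-1)).2
    simp only [sub_add_cancel] at h
    rw [← hax x, ← hb_shift x, ← hbx x, ← hEdef] at h
    linear_combination h
  have hα1 : ∀ x, ‖α x‖^2 < 1 := fun x => by nlinarith [h02 x, norm_nonneg (α x)]
  have hρsq : ∀ x, (ρ x)^2 = 1 - ‖α x‖^2 := fun x => by
    rw [hρ]; exact Real.sq_sqrt (by nlinarith [hα1 x])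
  have hconj : ∀ x, (starRingEnd ℂ) (α x) * (α x) = ((‖α x‖^2 : ℝ) : ℂ) := by
    intro x
    rw [mul_comm, Complex.mul_conj, Complex.normSq_eq_norm_sq]
  have hAc : ∀ x, ((ρ x : ℝ) : ℂ)^2 + (starRingEnd ℂ) (α x)*(α x) = 1 := by
    intro x
    rw [hconj x]
    have h1 := hρsq x
    have : ((ρ x : ℝ) : ℂ)^2 + ((‖α x‖^2 : ℝ) : ℂ) = (((ρ x)^2 + ‖α x‖^2 : ℝ) : ℂ) := by
      push_cast; ring
    rw [this, h1]
    norm_num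
  have hr1 : ∀ x, (ρ x : ℂ)*E*(a (x+1)) = a x + E*((starRingEnd ℂ) (α x))*(b x) := by
    intro x
    linear_combination -((ρ x : ℂ))*(hE1 x) + ((starRingEnd ℂ) (α x))*(hr2 x) + (a x)*(hAc x)
  -- decay
  have hu2 : Tendsto (fun x : ℤ => ‖u x‖^2) atTop (nhds 0) :=
    hu.tendsto_cofinite_zero.mono_left atTop_le_cofinite
  have hun : Tendsto (fun x : ℤ => ‖u x‖) atTop (nhds 0) := by
    have hkey : (fun x : ℤ => ‖u x‖) = (fun t => Real.sqrt t) ∘ (fun x : ℤ => ‖u x‖^2) := by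
      funext x; simp [Real.sqrt_sq (norm_nonneg (u x))]
    rw [hkey]
    have := (Real.continuous_sqrt.tendsto 0).comp hu2
    simpa using this
  have ha0 : Tendsto (fun x => ‖a x‖) atTop (nhds 0) :=
    squeeze_zero (fun x => norm_nonneg _) (fun x => by rw [hax]; exact norm_fst_le (u x)) hun
  have hb0 : Tendsto (fun x => ‖b x‖) atTop (nhds 0) := by
    have hshift : Tendsto (fun x : ℤ => x - 1) atTop atTop := by
      have := tendsto_atTop_add_const_right atTop (-1 : ℤ) tendsto_id
      simpa [sub_eq_add_neg] using this
    have hun' : Tendsto (fun x : ℤ => ‖u (x-1)‖) atTop (nhds 0) := hun.comp hshift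
    exact squeeze_zero (fun x => norm_nonneg _)
      (fun x => by rw [hbx]; exact norm_snd_le (u (x-1))) hun'
  -- spectral condition
  have hγ : 0 < 1 - ‖αp‖^2 - (Real.cos lam)^2 := by
    have h1 : (0:ℝ) ≤ 1 - ‖αp‖^2 := by nlinarith [norm_nonneg αp, h1p]
    have h2 : ρinf^2 = 1 - ‖αp‖^2 := by rw [hρinf]; exact Real.sq_sqrt h1
    nlinarith [abs_nonneg (Real.cos lam), _root_.sq_abs (Real.cos lam),
      mul_self_lt_mul_self (abs_nonneg (Real.cos lam)) hlam]
  have habz := aux α hsum h02 (Real.cos lam) (Real.sin lam) (Real.sin_sq_add_cos_sq lam)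
    E hEeq hEne ρ hρ a b hr1 hr2 ha0 hb0 αp htop h0p hγ
  intro x
  have h1 : (u x).1 = 0 := by rw [← hax x]; exact (habz x).1
  have h2 : (u x).2 = 0 := by rw [← hb_shift x]; exact (habz (x+1)).2
  have : u x = ((u x).1, (u x).2) := rfl
  rw [this, h1, h2]
  rfl
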